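/- For every real number y with 0 < y < 1, every integer n ≥ 1, and every real α with 0 < α < 1, one has ∑_{i=0}^∞ y^i * C(⌊iα⌋ + n - 1, n - 1) ≥ y^{1/α} / (1 - y^{1/α})^n, where C denotes the binomial coefficient and ⌊·⌋ the floor function. -/
import Mathlib


open Real

theorem stmt0 (y α : ℝ) (hy : 0 < y) (hy1 : y < 1) (hα : 0 < α) (hα1 : α < 1)
    (n : ℕ) (hn : 1 ≤ n) :
    y ^ (1 / α) / (1 - y ^ (1 / α)) ^ n ≤
      ∑' i : ℕ, y ^ i * ((⌊(i : ℝ) * α⌋₊ + n - 1).choose (n - 1) : ℝ) := by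
  set x : ℝ := y ^ (1 / α) with hx_def
  have hx0 : 0 < x := Real.rpow_pos_of_pos hy _
  have hx1 : x < 1 := Real.rpow_lt_one hy.le hy1 (by positivity)
  set g : ℕ → ℝ := fun i => y ^ i * ((⌊(i : ℝ) * α⌋₊ + n - 1).choose (n - 1) : ℝ) with hg_def
  set b : ℕ → ℝ := fun k => x ^ (k + 1) * ((k + n - 1).choose (n - 1) : ℝ) with hb_def
  have hg_nonneg : ∀ i, 0 ≤ g i := fun i => by positivity
  -- summability of g by comparison with (i + (n-1)).choose (n-1) * y^i
  have hmaj : Summable (fun i : ℕ => ((i + (n - 1)).choose (n - 1) : ℝ) * y ^ i) :=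
    summable_choose_mul_geometric_of_norm_lt_one (n - 1)
      (by rwa [Real.norm_eq_abs, abs_of_pos hy])
  have hg_sum : Summable g := by
    apply Summable.of_nonneg_of_le hg_nonneg _ hmaj
    intro i
    rw [hg_def]
    simp only []
    rw [mul_comm]
    apply mul_le_mul_of_nonneg_right _ (by positivity)
    have h1 : ⌊(i : ℝ) * α⌋₊ ≤ i := by
      calc ⌊(i : ℝ) * α⌋₊ ≤ ⌊(i : ℝ)⌋₊ := Nat.floor_le_floor
            (by nlinarith [Nat.cast_nonneg (α := ℝ) i])
        _ = i := Nat.floor_natCast i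
    exact_mod_cast Nat.choose_le_choose (n - 1) (by omega)
  -- summability of b
  have hb_sum : Summable b := by
    have := (summable_choose_mul_geometric_of_norm_lt_one (R := ℝ) (n - 1)
      (r := x) (by rwa [Real.norm_eq_abs, abs_of_pos hx0])).mul_left x
    apply this.congr
    intro k
    have hkn : k + n - 1 = k + (n - 1) := by omega
    show x * (((k + (n - 1)).choose (n - 1) : ℝ) * x ^ k)
        = x ^ (k + 1) * ((k + n - 1).choose (n - 1) : ℝ)
    rw [hkn]; ring
  -- tsum b = x / (1-x)^n
  have hb_tsum : ∑' k, b k = x / (1 - x) ^ n := by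
    have h := (hasSum_choose_mul_geometric_of_norm_lt_one (𝕜 := ℝ) (n - 1)
      (r := x) (by rwa [Real.norm_eq_abs, abs_of_pos hx0])).mul_left x
    have hn' : n - 1 + 1 = n := by omega
    rw [hn'] at h
    have h2 : (fun k : ℕ => x * (((k + (n - 1)).choose (n - 1) : ℝ) * x ^ k)) = b := by
      funext k
      have hkn : k + n - 1 = k + (n - 1) := by omega
      show x * (((k + (n - 1)).choose (n - 1) : ℝ) * x ^ k)
          = x ^ (k + 1) * ((k + n - 1).choose (n - 1) : ℝ)
      rw [hkn]; ring
    rw [h2] at h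
    rw [h.tsum_eq, mul_one_div]
  -- the injection
  set f : ℕ → ℕ := fun k => ⌈(k : ℝ) / α⌉₊ with hf_def
  have hf_lt : ∀ k : ℕ, (f k : ℝ) < ((k : ℝ) + 1) / α := by
    intro k
    have h1 : (f k : ℝ) < (k : ℝ) / α + 1 := Nat.ceil_lt_add_one (by positivity)
    have h2 : (k : ℝ) / α + 1 ≤ ((k : ℝ) + 1) / α := by
      have h3 : (1 : ℝ) ≤ 1 / α := by rw [le_div_iff₀ hα]; linarith
      rw [add_div]
      linarith
    linarith
  have hf_mono : StrictMono f := by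
    apply strictMono_nat_of_lt_succ
    intro k
    have h1 : (f k : ℝ) < ((k : ℝ) + 1) / α := hf_lt k
    have h2 : ((k : ℝ) + 1) / α ≤ (f (k + 1) : ℝ) := by
      have := Nat.le_ceil (((k : ℕ) + 1 : ℕ) : ℝ)
      have := Nat.le_ceil (((k + 1 : ℕ) : ℝ) / α)
      simpa [hf_def] using this
    exact_mod_cast h1.trans_le h2
  -- term comparison
  have hterm : ∀ k, b k ≤ g (f k) := by
    intro k
    have hfk_ge : (k : ℝ) ≤ (f k : ℝ) * α := by
      have h1 : (k : ℝ) / α ≤ (f k : ℝ) := Nat.le_ceil _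
      calc (k : ℝ) = (k : ℝ) / α * α := by field_simp
        _ ≤ (f k : ℝ) * α := by nlinarith
    have hfloor : k ≤ ⌊(f k : ℝ) * α⌋₊ := Nat.le_floor hfk_ge
    have hchoose : ((k + n - 1).choose (n - 1) : ℝ) ≤
        ((⌊(f k : ℝ) * α⌋₊ + n - 1).choose (n - 1) : ℝ) := by
      exact_mod_cast Nat.choose_le_choose (n - 1) (by omega)
    have hpow : x ^ (k + 1) ≤ y ^ (f k) := by
      have hx_eq : x ^ (k + 1) = y ^ (((k : ℝ) + 1) / α) := by
        rw [hx_def, ← Real.rpow_natCast (y ^ (1 / α)) (k + 1), ← Real.rpow_mul hy.le]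
        congr 1
        push_cast
        ring
      have hy_eq : y ^ (f k) = y ^ ((f k : ℝ) : ℝ) := by
        rw [Real.rpow_natCast]
      rw [hx_eq, hy_eq]
      exact Real.rpow_le_rpow_of_exponent_ge hy hy1.le (hf_lt k).le
    calc b k = x ^ (k + 1) * ((k + n - 1).choose (n - 1) : ℝ) := rfl
      _ ≤ y ^ (f k) * ((⌊(f k : ℝ) * α⌋₊ + n - 1).choose (n - 1) : ℝ) := by
          apply mul_le_mul hpow hchoose (by positivity) (by positivity)
      _ = g (f k) := rfl
  calc y ^ (1 / α) / (1 - y ^ (1 / α)) ^ n = ∑' k, b k := hb_tsum.symm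
    _ ≤ ∑' i, g i := Summable.tsum_le_tsum_of_inj f hf_mono.injective
        (fun c _ => hg_nonneg c) hterm hb_sum hg_sum
    _ = _ := rfl
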